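/- Let N ≥ 1 and let α_1, …, α_N be positive reals with ∑_{i=1}^N α_i = 1. For each i let d_i : ℝ → (0,∞), and for each pair i ≠ j let e_{ij} : ℝ → (0,∞), be functions such that d_i(γ)/e_{ij}(γ) → 0 as γ → +∞ for all i ≠ j. Then the difference [−∑_{i=1}^N α_i log₂( α_i/d_i(γ) + ∑_{j≠i} α_j/e_{ij}(γ) )] − [∑_{i=1}^N α_i log₂( d_i(γ)/α_i )] converges to 0 as γ → +∞. -/

import Mathlib

open Finset Filter

/-- Analytic core of Appendix A: if every cross term `e i j (γ)` dominates
`d i (γ)` as `γ → ∞`, then the Gaussian-mixture rate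
`−∑ᵢ αᵢ log₂(αᵢ/dᵢ(γ) + ∑_{j≠i} αⱼ/e_{ij}(γ))` approaches the upper bound
`∑ᵢ αᵢ log₂(dᵢ(γ)/αᵢ)`. -/
theorem stmt7 (N : ℕ) (hN : 1 ≤ N) (α : Fin N → ℝ)
    (hα : ∀ i, 0 < α i) (hαs : ∑ i, α i = 1)
    (d : Fin N → ℝ → ℝ) (hd : ∀ i γ, 0 < d i γ)
    (e : Fin N → Fin N → ℝ → ℝ) (he : ∀ i j, i ≠ j → ∀ γ, 0 < e i j γ)
    (hlim : ∀ i j, i ≠ j →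
      Tendsto (fun γ => d i γ / e i j γ) atTop (nhds 0)) :
    Tendsto (fun γ =>
        (-∑ i, α i * Real.logb 2
            (α i / d i γ + ∑ j ∈ Finset.univ.erase i, α j / e i j γ)) -
          ∑ i, α i * Real.logb 2 (d i γ / α i))
      atTop (nhds 0) := by
  set S : Fin N → ℝ → ℝ := fun i γ => ∑ j ∈ Finset.univ.erase i, α j / e i j γ with hS
  have hSnn : ∀ i γ, 0 ≤ S i γ := by
    intro i γ
    apply Finset.sum_nonneg
    intro j hj
    have hij : i ≠ j := fun h => (Finset.mem_erase.mp hj).1 h.symm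
    exact le_of_lt (div_pos (hα j) (he i j hij γ))
  -- algebraic rewriting of the expression
  have heq : ∀ γ,
      (-∑ i, α i * Real.logb 2 (α i / d i γ + S i γ)) -
        ∑ i, α i * Real.logb 2 (d i γ / α i)
      = -∑ i, α i * Real.logb 2 (1 + d i γ / α i * S i γ) := by
    intro γ
    rw [neg_sub_left, neg_inj, ← Finset.sum_add_distrib]
    apply Finset.sum_congr rfl
    intro i _
    rw [← mul_add]
    congr 1
    have h1 : 0 < α i / d i γ + S i γ :=
      lt_of_lt_of_le (div_pos (hα i) (hd i γ)) (le_add_of_nonneg_right (hSnn i γ))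
    have h2 : 0 < d i γ / α i := div_pos (hd i γ) (hα i)
    rw [← Real.logb_mul (ne_of_gt h2) (ne_of_gt h1)]
    rw [mul_add, div_mul_div_comm, mul_comm (α i) (d i γ),
      div_self (ne_of_gt (mul_pos (hd i γ) (hα i)))]
  -- limit of the inner quantity
  have hinner : ∀ i, Tendsto (fun γ => d i γ / α i * S i γ) atTop (nhds 0) := by
    intro i
    have : (fun γ => d i γ / α i * S i γ)
        = fun γ => ∑ j ∈ Finset.univ.erase i, α j / α i * (d i γ / e i j γ) := by
      funext γ
      rw [hS, Finset.mul_sum]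
      exact Finset.sum_congr rfl fun j _ => by ring
    rw [this]
    have h0 : (0:ℝ) = ∑ j ∈ Finset.univ.erase i, (0:ℝ) := by simp
    rw [h0]
    apply tendsto_finset_sum
    intro j hj
    have hij : i ≠ j := fun h => (Finset.mem_erase.mp hj).1 h.symm
    simpa using (hlim i j hij).const_mul (α j / α i)
  -- each log term tends to 0
  have hterm : ∀ i, Tendsto (fun γ => α i * Real.logb 2 (1 + d i γ / α i * S i γ))
      atTop (nhds 0) := by
    intro i
    have h1 : Tendsto (fun γ => 1 + d i γ / α i * S i γ) atTop (nhds 1) := by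
      simpa using (tendsto_const_nhds (x := (1:ℝ))).add (hinner i)
    have hlog : Tendsto (fun γ => Real.log (1 + d i γ / α i * S i γ)) atTop (nhds 0) := by
      have := (Real.continuousAt_log one_ne_zero).tendsto.comp h1
      simpa [Function.comp_def] using this
    have : Tendsto (fun γ => Real.logb 2 (1 + d i γ / α i * S i γ)) atTop (nhds 0) := by
      simp only [Real.logb]
      simpa using hlog.div_const (Real.log 2)
    simpa using this.const_mul (α i)
  have hsum : Tendsto (fun γ => ∑ i, α i * Real.logb 2 (1 + d i γ / α i * S i γ))
      atTop (nhds 0) := by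
    have h0 : (0:ℝ) = ∑ _i : Fin N, (0:ℝ) := by simp
    rw [h0]
    exact tendsto_finset_sum _ fun i _ => hterm i
  have := hsum.neg
  rw [neg_zero] at this
  exact Tendsto.congr (fun γ => (heq γ).symm) this
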